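/- Let F be a field of characteristic zero, n a natural number, and U₀ a ℚ-linear subspace of ℚ^n = (Fin n → ℚ). Let U be the F-linear span in F^n = (Fin n → F) of the image of U₀ under the coordinatewise map v ↦ (i ↦ algebraMap ℚ F (v i)), and let B(x,y) = ∑_i x_i·y_i be the standard bilinear form on F^n. Then the restriction of B to U is nondegenerate: if x ∈ U satisfies B(x,y) = 0 for all y ∈ U, then x = 0. -/

import Mathlib

/-- A positive definite rational structure stays nondegenerate after extension of scalars to
a field of characteristic zero: if `U₀` is a `ℚ`-subspace of `ℚ^n` and `U` is the `F`-span
of its image in `F^n` (coordinatewise via `algebraMap ℚ F`), then the standard bilinear form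
`B(x,y) = ∑ x_i y_i` restricted to `U` is nondegenerate. -/
theorem standard_bilinear_nondegenerate_on_rational_span
    {F : Type*} [Field F] [CharZero F] {n : ℕ}
    (U₀ : Submodule ℚ (Fin n → ℚ)) :
    ∀ x ∈ Submodule.span F
      ((fun v : Fin n → ℚ => fun i : Fin n => algebraMap ℚ F (v i)) '' (U₀ : Set (Fin n → ℚ))),
      (∀ y ∈ Submodule.span F
        ((fun v : Fin n → ℚ => fun i : Fin n => algebraMap ℚ F (v i)) '' (U₀ : Set (Fin n → ℚ))),
        ∑ i : Fin n, x i * y i = 0) → x = 0 := by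
  classical
  set φ : ℚ →+* F := (algebraMap ℚ F) with hφdef
  set f : (Fin n → ℚ) → (Fin n → F) := fun v => fun i => φ (v i) with hfdef
  intro x hx hortho
  set k := Module.finrank ℚ U₀ with hk
  let b : Module.Basis (Fin k) ℚ U₀ := Module.finBasis ℚ U₀
  set w : Fin k → (Fin n → ℚ) := fun j => (b j : Fin n → ℚ) with hw
  have hli : LinearIndependent ℚ w := by
    have := b.linearIndependent.map' U₀.subtype (Submodule.ker_subtype U₀)
    exact this
  -- span equality
  have hspan : Submodule.span F (f '' (U₀ : Set (Fin n → ℚ)))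
      = Submodule.span F (Set.range fun j => f (w j)) := by
    apply le_antisymm
    · rw [Submodule.span_le]
      rintro _ ⟨u, hu, rfl⟩
      obtain ⟨r, hrepr⟩ : ∃ r : Fin k → ℚ, u = ∑ j, r j • w j := by
        refine ⟨fun j => b.repr ⟨u, hu⟩ j, ?_⟩
        have h1 := congrArg (Subtype.val) (b.sum_repr ⟨u, hu⟩)
        simp only [Submodule.coe_sum, SetLike.val_smul] at h1
        exact h1.symm
      have hfu : f u = ∑ j, φ (r j) • f (w j) := by
        funext i
        simp only [hfdef, hrepr]
        simp only [Finset.sum_apply, Pi.smul_apply, smul_eq_mul, map_sum, map_mul]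
      rw [hfu]
      exact Submodule.sum_mem _ fun j _ => Submodule.smul_mem _ _
        (Submodule.subset_span ⟨j, rfl⟩)
    · rw [Submodule.span_le]
      rintro _ ⟨j, rfl⟩
      exact Submodule.subset_span ⟨w j, (b j).2, rfl⟩
  -- Gram matrix
  set G : Matrix (Fin k) (Fin k) ℚ := Matrix.of fun i j => ∑ t, w i t * w j t with hG
  have hdetG : G.det ≠ 0 := by
    intro hdet
    obtain ⟨c, hc0, hc⟩ := Matrix.exists_mulVec_eq_zero_iff.mpr hdet
    set u : Fin n → ℚ := ∑ j, c j • w j with hu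
    have hquad : ∑ t, u t * u t = 0 := by
      have h1 : ∑ t, u t * u t = dotProduct c (G.mulVec c) := by
        simp only [hu, dotProduct, Matrix.mulVec, hG, Matrix.of_apply,
          Finset.sum_apply, Pi.smul_apply, smul_eq_mul, Finset.mul_sum, Finset.sum_mul]
        rw [Finset.sum_comm]
        apply Finset.sum_congr rfl
        intro i _
        rw [Finset.sum_comm]
        apply Finset.sum_congr rfl
        intro t _
        apply Finset.sum_congr rfl
        intro j _
        ring
      rw [h1, hc, dotProduct_zero]
    have hu0 : u = 0 := by
      funext t
      have := (Finset.sum_eq_zero_iff_of_nonneg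
        (fun t _ => mul_self_nonneg (u t))).mp hquad t (Finset.mem_univ t)
      exact mul_self_eq_zero.mp this
    have hsum0 : ∑ j, c j • w j = 0 := by rw [← hu]; exact hu0
    exact hc0 (funext fun j => Fintype.linearIndependent_iff.mp hli c hsum0 j)
  -- representation of x
  rw [hspan] at hx
  obtain ⟨c, hc⟩ := (Submodule.mem_span_range_iff_exists_fun F).mp hx
  -- orthogonality gives vecMul c (G.map φ) = 0
  have hvm : Matrix.vecMul c (G.map φ) = 0 := by
    funext i
    have hy : f (w i) ∈ Submodule.span F (f '' (U₀ : Set (Fin n → ℚ))) := by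
      rw [hspan]; exact Submodule.subset_span ⟨i, rfl⟩
    have h0 := hortho (f (w i)) hy
    rw [← hc] at h0
    simp only [Matrix.vecMul, dotProduct, Matrix.map_apply, hG, Matrix.of_apply,
      Pi.zero_apply]
    rw [← h0]
    simp only [Finset.sum_apply, Pi.smul_apply, smul_eq_mul, hfdef, map_sum, map_mul,
      Finset.sum_mul, Finset.mul_sum]
    rw [Finset.sum_comm]
    exact Finset.sum_congr rfl fun t _ => Finset.sum_congr rfl fun j _ => by ring
  have hdet' : (G.map φ).det ≠ 0 := by
    rw [show G.map φ = φ.mapMatrix G from rfl, ← RingHom.map_det]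
    simpa using hdetG
  have hc0 : c = 0 := by
    by_contra h
    exact hdet' (Matrix.exists_vecMul_eq_zero_iff.mp ⟨c, h, hvm⟩)
  rw [← hc, hc0]
  simp
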